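/- Let p be a prime, let d ≥ 1, and let κ, λ be elements of Z/p^d Z with λ a unit. Let M_x be the 2×2 matrix with rows (1, 0) and (κ, λ), and let M_y be the 2×2 matrix with rows (λ, κ) and (0, 1); both are invertible over Z/p^d Z. Let A be the subgroup of GL₂(Z/p^d Z) generated by M_x and M_y, and suppose that the order of A is coprime to p. Then the following are equivalent: (a) A is abelian; (b) κ = 0; (c) κ is divisible by p in Z/p^d Z (i.e. κ lies in the ideal generated by p). -/

import Mathlib

private lemma key_choose (p n k : ℕ) (hp : p.Prime) (hk : k ≠ 0) :
    p ^ n ∣ p ^ k * (p ^ n).choose k := by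
  rcases lt_or_ge (p ^ n) k with h | h
  · simp [Nat.choose_eq_zero_of_lt h]
  have hpn : 0 < p ^ n := pow_pos hp.pos n
  have hid : k * (p ^ n).choose k = p ^ n * (p ^ n - 1).choose (k - 1) := by
    have := Nat.add_one_mul_choose_eq (p ^ n - 1) (k - 1)
    rw [show p ^ n - 1 + 1 = p ^ n by omega, show k - 1 + 1 = k by omega] at this
    rw [mul_comm]; exact this.symm
  have hdvd : p ^ n ∣ k * (p ^ n).choose k := ⟨_, hid⟩
  set m := k.factorization p with hm
  have hpm : p ^ m ∣ k := Nat.ordProj_dvd k p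
  have hmk : m ≤ k := le_of_lt (Nat.factorization_lt p hk)
  have hmn : m ≤ n := by
    have : p ^ m ≤ p ^ n := le_trans (Nat.le_of_dvd (Nat.pos_of_ne_zero hk) hpm) h
    exact (Nat.pow_le_pow_iff_right hp.one_lt).mp this
  obtain ⟨u, hu⟩ := hpm
  have hpu : ¬ p ∣ u := by
    intro ⟨v, hv⟩
    have : p ^ (m + 1) ∣ k := ⟨v, by rw [hu, hv]; ring⟩
    exact (Nat.pow_succ_factorization_not_dvd hk hp) this
  have h2 : p ^ (n - m) ∣ u * (p ^ n).choose k := by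
    have : p ^ m * p ^ (n - m) ∣ p ^ m * (u * (p ^ n).choose k) := by
      rw [← mul_assoc, ← hu, ← pow_add, Nat.add_sub_cancel' hmn]; exact hdvd
    exact (mul_dvd_mul_iff_left (pow_pos hp.pos m).ne').mp this
  have h3 : p ^ (n - m) ∣ (p ^ n).choose k :=
    (Nat.Coprime.pow_left _ ((Nat.Prime.coprime_iff_not_dvd hp).mpr hpu)).dvd_of_dvd_mul_left h2
  calc p ^ n = p ^ m * p ^ (n - m) := by rw [← pow_add, Nat.add_sub_cancel' hmn]
  _ ∣ p ^ k * (p ^ n).choose k := mul_dvd_mul (pow_dvd_pow p hmk) h3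

private lemma matrix_pow_eq_one (p d : ℕ) (hp : p.Prime)
    (M : Matrix (Fin 2) (Fin 2) (ZMod (p ^ d)))
    (h : ∀ i j, (p : ZMod (p ^ d)) ∣ (M - 1) i j) : M ^ (p ^ d) = 1 := by
  classical
  choose N' hN' using h
  set N : Matrix (Fin 2) (Fin 2) (ZMod (p ^ d)) := Matrix.of N' with hNdef
  have hM : M = (p : ZMod (p ^ d)) • N + 1 := by
    ext i j
    have h1 := hN' i j
    simp only [Matrix.sub_apply] at h1
    simp only [Matrix.add_apply, Matrix.smul_apply, smul_eq_mul, hNdef, Matrix.of_apply]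
    linear_combination h1
  rw [hM, (Commute.one_right ((p : ZMod (p ^ d)) • N)).add_pow]
  rw [Finset.sum_eq_single 0]
  · simp
  · intro m hm hm0
    rw [one_pow, mul_one, smul_pow]
    have hz : ((p : ZMod (p ^ d)) ^ m * ((p ^ d).choose m : ZMod (p ^ d))) = 0 := by
      rw [← Nat.cast_pow, ← Nat.cast_mul, ZMod.natCast_eq_zero_iff]
      exact key_choose p d m hp hm0
    have heq : ((p : ZMod (p ^ d)) ^ m • N ^ m) *
        (((p ^ d).choose m : ℕ) : Matrix (Fin 2) (Fin 2) (ZMod (p ^ d)))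
        = ((p : ZMod (p ^ d)) ^ m * ((p ^ d).choose m : ZMod (p ^ d))) • N ^ m := by
      rw [smul_mul_assoc, mul_smul]
      congr 1
      rw [← (Nat.cast_commute ((p ^ d).choose m) (N ^ m)).eq,
        ← map_natCast (algebraMap (ZMod (p ^ d)) (Matrix (Fin 2) (Fin 2) (ZMod (p ^ d))))
          ((p ^ d).choose m),
        ← Algebra.smul_def]
    rw [heq, hz, zero_smul]
  · intro h0; simp at h0

private lemma unit_eq_one (p d : ℕ) (hp : p.Prime)
    (A : Subgroup (GL (Fin 2) (ZMod (p ^ d)))) (hA : (Nat.card A).Coprime p)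
    (g : GL (Fin 2) (ZMod (p ^ d))) (hg : g ∈ A)
    (h : ∀ i j, (p : ZMod (p ^ d)) ∣ ((g : Matrix (Fin 2) (Fin 2) (ZMod (p ^ d))) - 1) i j) :
    g = 1 := by
  have hpow : g ^ (p ^ d) = 1 := by
    apply Units.ext
    rw [Units.val_pow_eq_pow_val, Units.val_one]
    exact matrix_pow_eq_one p d hp _ h
  have h1 : orderOf g ∣ p ^ d := orderOf_dvd_of_pow_eq_one hpow
  have h2 : orderOf g ∣ Nat.card A := Subgroup.orderOf_dvd_natCard A hg
  have h3 : orderOf g ∣ Nat.gcd (Nat.card A) (p ^ d) := Nat.dvd_gcd h2 h1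
  have h4 : Nat.gcd (Nat.card A) (p ^ d) = 1 := Nat.Coprime.pow_right d hA
  rw [h4, Nat.dvd_one] at h3
  exact orderOf_eq_one_iff.mp h3

private lemma isUnit_of_not_dvd (p d : ℕ) (hp : p.Prime) (x : ZMod (p ^ d))
    (h : ¬ (p : ZMod (p ^ d)) ∣ x) : IsUnit x := by
  haveI : NeZero (p ^ d) := ⟨pow_ne_zero d hp.pos.ne'⟩
  have hx : ((x.val : ℕ) : ZMod (p ^ d)) = x := ZMod.natCast_rightInverse x
  have hnd : ¬ p ∣ x.val := by
    rintro ⟨c, hc⟩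
    exact h ⟨(c : ZMod (p ^ d)), by rw [← hx, hc]; push_cast; ring⟩
  have hcop : x.val.Coprime (p ^ d) :=
    Nat.Coprime.pow_right d ((Nat.Prime.coprime_iff_not_dvd hp).mpr hnd).symm
  rw [← hx]
  exact (ZMod.isUnit_iff_coprime x.val (p ^ d)).mpr hcop

private lemma closure_pair_comm {G : Type*} [Group G] {x y : G} (h : Commute x y)
    {a b : G} (ha : a ∈ Subgroup.closure {x, y}) (hb : b ∈ Subgroup.closure {x, y}) :
    Commute a b := by
  have hgen : ∀ s ∈ ({x, y} : Set G), ∀ t ∈ ({x, y} : Set G), Commute s t := by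
    intro s hs t ht
    simp only [Set.mem_insert_iff, Set.mem_singleton_iff] at hs ht
    rcases hs with rfl | rfl <;> rcases ht with rfl | rfl
    exacts [Commute.refl _, h, h.symm, Commute.refl _]
  refine Subgroup.closure_induction (fun s hs => ?_) (Commute.one_left b)
    (fun g g' _ _ hg hh => hg.mul_left hh) (fun g _ hg => hg.inv_left) ha
  exact Subgroup.closure_induction (fun t ht => hgen s hs t ht) (Commute.one_right s)
    (fun g g' _ _ h1 h2 => h1.mul_right h2) (fun g _ h1 => h1.inv_right) hb

/-- Lemma 7.1. Let `p` be prime, `d ≥ 1`, and `κ, λ ∈ Z/p^dZ` with `λ` a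
unit. Let `A ≤ GL₂(Z/p^dZ)` be generated by `M_x = [[1,0],[κ,λ]]` and `M_y = [[λ,κ],[0,1]]`,
and suppose `|A|` is coprime to `p`. Then: `A` is abelian ↔ `κ = 0` ↔ `p ∣ κ`. -/
theorem diagonal_action_lemma
    (p d : ℕ) (hp : p.Prime) (hd : 1 ≤ d)
    (κ lam : ZMod (p ^ d)) (hlam : IsUnit lam)
    (Mx My : Matrix.GeneralLinearGroup (Fin 2) (ZMod (p ^ d)))
    (hMx : (Mx : Matrix (Fin 2) (Fin 2) (ZMod (p ^ d))) = !![1, 0; κ, lam])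
    (hMy : (My : Matrix (Fin 2) (Fin 2) (ZMod (p ^ d))) = !![lam, κ; 0, 1])
    (hA : (Nat.card (Subgroup.closure ({Mx, My} :
      Set (Matrix.GeneralLinearGroup (Fin 2) (ZMod (p ^ d))))) ).Coprime p) :
    ((∀ a ∈ Subgroup.closure ({Mx, My} :
        Set (Matrix.GeneralLinearGroup (Fin 2) (ZMod (p ^ d)))),
      ∀ b ∈ Subgroup.closure ({Mx, My} :
        Set (Matrix.GeneralLinearGroup (Fin 2) (ZMod (p ^ d)))),
      a * b = b * a) ↔ κ = 0) ∧
    (κ = 0 ↔ (p : ZMod (p ^ d)) ∣ κ) := by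
  have hMxA : Mx ∈ Subgroup.closure ({Mx, My} : Set (GL (Fin 2) (ZMod (p ^ d)))) :=
    Subgroup.subset_closure (Set.mem_insert _ _)
  have hMyA : My ∈ Subgroup.closure ({Mx, My} : Set (GL (Fin 2) (ZMod (p ^ d)))) :=
    Subgroup.subset_closure (Set.mem_insert_of_mem _ rfl)
  haveI : Fact (1 < p ^ d) := ⟨by
    calc 1 < p := hp.one_lt
    _ ≤ p ^ d := Nat.le_self_pow (by omega) p⟩
  -- core implication: p ∣ κ → κ = 0
  have hcore : (p : ZMod (p ^ d)) ∣ κ → κ = 0 := by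
    intro hκ
    by_cases hlm : (p : ZMod (p ^ d)) ∣ (lam - 1)
    · -- My ≡ 1 mod p, so My = 1, hence κ = 0
      have hent : ∀ i j, (p : ZMod (p ^ d)) ∣
          ((My : Matrix (Fin 2) (Fin 2) (ZMod (p ^ d))) - 1) i j := by
        intro i j
        rw [hMy]
        fin_cases i <;> fin_cases j <;>
          simp [Matrix.sub_apply, Matrix.one_apply] <;>
          first
            | exact hlm
            | exact hκ
            | exact dvd_zero _
      have hMy1 : My = 1 := unit_eq_one p d hp _ hA My hMyA hent
      rw [hMy1, Units.val_one] at hMy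
      have h01 := congrFun (congrFun hMy 0) 1
      simpa [Matrix.one_apply] using h01.symm
    · -- lam - 1 is a unit
      have hu : IsUnit (lam - 1) := isUnit_of_not_dvd p d hp _ hlm
      set E : GL (Fin 2) (ZMod (p ^ d)) := (Mx * My) * (My * Mx)⁻¹ with hEdef
      have hEA : E ∈ Subgroup.closure ({Mx, My} : Set (GL (Fin 2) (ZMod (p ^ d)))) :=
        mul_mem (mul_mem hMxA hMyA) (inv_mem (mul_mem hMyA hMxA))
      have hdiff : (!![1, 0; κ, lam] * !![lam, κ; 0, 1] -
          !![lam, κ; 0, 1] * !![1, 0; κ, lam] : Matrix (Fin 2) (Fin 2) (ZMod (p ^ d)))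
          = κ • !![-κ, 1 - lam; lam - 1, κ] := by
        rw [Matrix.mul_fin_two, Matrix.mul_fin_two]
        ext i j
        fin_cases i <;> fin_cases j <;>
          simp [Matrix.sub_apply, Matrix.smul_apply, smul_eq_mul] <;> ring
      have hfact : (E : Matrix (Fin 2) (Fin 2) (ZMod (p ^ d))) - 1 =
          ((Mx : Matrix (Fin 2) (Fin 2) (ZMod (p ^ d))) * My -
            (My : Matrix (Fin 2) (Fin 2) (ZMod (p ^ d))) * Mx) *
            (((My * Mx)⁻¹ : GL (Fin 2) (ZMod (p ^ d))) : Matrix (Fin 2) (Fin 2) (ZMod (p ^ d))) := by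
        rw [Matrix.sub_mul]
        congr 1
        · rw [← Units.val_mul My Mx, Units.mul_inv]
      have hent : ∀ i j, (p : ZMod (p ^ d)) ∣
          ((E : Matrix (Fin 2) (Fin 2) (ZMod (p ^ d))) - 1) i j := by
        intro i j
        rw [hfact, Matrix.mul_apply]
        apply Finset.dvd_sum
        intro k _
        apply Dvd.dvd.mul_right
        rw [hMx, hMy, hdiff, Matrix.smul_apply, smul_eq_mul]
        exact Dvd.dvd.mul_right hκ _
      have hE1 : E = 1 := unit_eq_one p d hp _ hA E hEA hent
      have hcom : Mx * My = My * Mx := by rwa [hEdef, mul_inv_eq_one] at hE1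
      have hm : (!![1, 0; κ, lam] : Matrix (Fin 2) (Fin 2) (ZMod (p ^ d))) * !![lam, κ; 0, 1]
          = !![lam, κ; 0, 1] * !![1, 0; κ, lam] := by
        rw [← hMx, ← hMy, ← Units.val_mul, ← Units.val_mul, hcom]
      rw [Matrix.mul_fin_two, Matrix.mul_fin_two] at hm
      have h10 := congrFun (congrFun hm 1) 0
      simp at h10
      have hz : (lam - 1) * κ = 0 := by linear_combination h10
      exact (hu.mul_right_eq_zero).mp hz
  refine ⟨⟨fun hab => ?_, fun h0 => ?_⟩, ⟨fun h0 => by rw [h0]; exact dvd_zero _, hcore⟩⟩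
  · -- abelian → κ = 0
    have hcom : Mx * My = My * Mx := hab Mx hMxA My hMyA
    have hm : (!![1, 0; κ, lam] : Matrix (Fin 2) (Fin 2) (ZMod (p ^ d))) * !![lam, κ; 0, 1]
        = !![lam, κ; 0, 1] * !![1, 0; κ, lam] := by
      rw [← hMx, ← hMy, ← Units.val_mul, ← Units.val_mul, hcom]
    rw [Matrix.mul_fin_two, Matrix.mul_fin_two] at hm
    have h00 := congrFun (congrFun hm 0) 0
    simp at h00
    have hκ2 : κ * κ = 0 := by linear_combination h00
    have hnu : ¬ IsUnit κ := by
      intro hk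
      have := hk.mul hk
      rw [hκ2] at this
      exact not_isUnit_zero this
    have hκp : (p : ZMod (p ^ d)) ∣ κ := by
      by_contra hc
      exact hnu (isUnit_of_not_dvd p d hp κ hc)
    exact hcore hκp
  · -- κ = 0 → abelian
    subst h0
    have hcomm : Commute Mx My := by
      apply Units.ext
      show (Mx : Matrix (Fin 2) (Fin 2) (ZMod (p ^ d))) * My
        = (My : Matrix (Fin 2) (Fin 2) (ZMod (p ^ d))) * Mx
      rw [hMx, hMy, Matrix.mul_fin_two, Matrix.mul_fin_two]
      norm_num [mul_comm]
    intro a ha b hb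
    exact closure_pair_comm hcomm ha hb
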